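/- Fix a dense set S ⊆ ℕ^{<ℕ} (for every u there is s ∈ S extending u), a strictly increasing α ∈ ℕ^ℕ, and let X_α = {x ∈ ℕ^ℕ : ∀n ∃m ≥ n, x↾m ∈ α(m)^m}. Define the ℵ₀-dimensional directed hypergraph G₀^ω on X_α whose hyperedges are the sequences (s⌢i⌢x)_{i∈ℕ} for s ∈ S and x ∈ ℕ^ℕ (restricted to X_α). Then every Baire-measurable G₀^ω-independent subset of X_α is meager. -/

import Mathlib

open Set

/-- The concatenation `s⌢i⌢x ∈ ℕ^ℕ` of a finite sequence `s`, a single term `i`, and `x ∈ ℕ^ℕ`. -/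
def extSeq (s : List ℕ) (i : ℕ) (x : ℕ → ℕ) : ℕ → ℕ := fun n =>
  if h : n < s.length then s.get ⟨n, h⟩ else if n = s.length then i else x (n - s.length - 1)

/-- The dense `Gδ` set `X_α = {x ∈ ℕ^ℕ : ∀n ∃m ≥ n, x↾m ∈ α(m)^m}`. -/
def Xalpha (α : ℕ → ℕ) : Set (ℕ → ℕ) := {x | ∀ n, ∃ m ≥ n, ∀ i < m, x i < α m}

lemma extSeq_continuous (s : List ℕ) (i : ℕ) : Continuous (extSeq s i) := by
  apply continuous_pi
  intro n
  unfold extSeq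
  split_ifs
  · exact continuous_const
  · exact continuous_const
  · exact continuous_apply _

lemma isOpen_cyl (n : ℕ) (w : ℕ → ℕ) : IsOpen {z : ℕ → ℕ | ∀ k < n, z k = w k} := by
  have : {z : ℕ → ℕ | ∀ k < n, z k = w k}
      = ⋂ k ∈ Finset.range n, (fun z : ℕ → ℕ => z k) ⁻¹' {w k} := by
    ext z; simp [Finset.mem_range]
  rw [this]
  exact isOpen_biInter_finset fun k _ => (isOpen_discrete _).preimage (continuous_apply k)

lemma extSeq_retract (s : List ℕ) (i : ℕ) (x : ℕ → ℕ) :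
    (fun n => extSeq s i x (n + s.length + 1)) = x := by
  funext n
  unfold extSeq
  have h1 : ¬ (n + s.length + 1 < s.length) := by omega
  have h2 : ¬ (n + s.length + 1 = s.length) := by omega
  simp only [h1, h2, dif_neg, if_neg, not_false_iff]
  congr 1
  omega

lemma extSeq_range (s : List ℕ) (i : ℕ) :
    Set.range (extSeq s i)
      = {z : ℕ → ℕ | ∀ k < s.length + 1, z k = extSeq s i (fun _ => 0) k} := by
  ext z
  constructor
  · rintro ⟨x, rfl⟩ k hk
    unfold extSeq
    rcases Nat.lt_or_ge k s.length with h | h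
    · simp [h]
    · have : k = s.length := by omega
      simp [this]
  · intro hz
    refine ⟨fun n => z (n + s.length + 1), ?_⟩
    funext k
    unfold extSeq
    rcases Nat.lt_or_ge k s.length with h | h
    · have := hz k (by omega)
      unfold extSeq at this
      simpa [h] using this.symm
    · rcases Nat.eq_or_lt_of_le h with h' | h'
      · have := hz k (by omega)
        unfold extSeq at this
        simp only [← h'] at this ⊢
        simpa using this.symm
      · have h1 : ¬ (k < s.length) := by omega
        have h2 : ¬ (k = s.length) := by omega
        simp only [h1, h2, dif_neg, if_neg, not_false_iff]
        congr 1
        omega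

lemma extSeq_isOpenMap (s : List ℕ) (i : ℕ) : IsOpenMap (extSeq s i) := by
  intro V hV
  have hr : Continuous (fun z : ℕ → ℕ => fun n => z (n + s.length + 1)) :=
    continuous_pi fun n => continuous_apply _
  have himg : extSeq s i '' V
      = Set.range (extSeq s i) ∩ (fun z : ℕ → ℕ => fun n => z (n + s.length + 1)) ⁻¹' V := by
    ext z
    constructor
    · rintro ⟨x, hx, rfl⟩
      refine ⟨⟨x, rfl⟩, ?_⟩
      simpa [Set.mem_preimage, extSeq_retract] using hx
    · rintro ⟨⟨x, rfl⟩, hz⟩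
      exact ⟨x, by simpa [Set.mem_preimage, extSeq_retract] using hz, rfl⟩
  rw [himg, extSeq_range]
  exact (isOpen_cyl _ _).inter (hV.preimage hr)

/-- For a dense `S ⊆ ℕ^{<ℕ}` and strictly increasing `α`, every Baire-measurable
subset of `X_α` that is independent for the hypergraph `G₀^ω` (with hyperedges
`(s⌢i⌢x)_{i ∈ ℕ}` for `s ∈ S`) is meager. -/
theorem stmt9 (S : Set (List ℕ)) (hSdense : ∀ u : List ℕ, ∃ s ∈ S, u <+: s)
    (α : ℕ → ℕ) (hα : StrictMono α)
    (A : Set (ℕ → ℕ)) (hAsub : A ⊆ Xalpha α)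
    (hABaire : BaireMeasurableSet A)
    (hAindep : ¬ ∃ s ∈ S, ∃ x : ℕ → ℕ, ∀ i : ℕ, extSeq s i x ∈ A) :
    IsMeagre A := by
  by_contra hA
  obtain ⟨U, hUopen, hAU⟩ := hABaire.residualEq_isOpen
  have hR : {x : ℕ → ℕ | x ∈ A ↔ x ∈ U} ∈ residual (ℕ → ℕ) := by
    have := Filter.eventuallyEq_set.mp hAU
    exact this
  -- U is nonempty
  have hUne : U.Nonempty := by
    rcases Set.eq_empty_or_nonempty U with h | h
    · exfalso
      apply hA
      refine Filter.mem_of_superset hR ?_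
      intro x hx
      simp only [Set.mem_setOf_eq, h, Set.mem_empty_iff_false, iff_false] at hx
      exact hx
    · exact h
  obtain ⟨y, hy⟩ := hUne
  obtain ⟨I, u, h1, h2⟩ := isOpen_pi_iff.mp hUopen y hy
  set n : ℕ := I.sup id + 1 with hn
  obtain ⟨s, hsS, hpre⟩ := hSdense (List.ofFn (fun k : Fin n => y k))
  have hlen : n ≤ s.length := by
    have := hpre.length_le
    simpa [hn] using this
  have hsget : ∀ k (hk : k < n), s.get ⟨k, lt_of_lt_of_le hk hlen⟩ = y k := by
    intro k hk
    have h := hpre.getElem (i := k) (by simpa [hn] using hk)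
    simp only [List.get_eq_getElem, ← h, List.getElem_ofFn]
  -- every extSeq s i x lies in U
  have hrangeU : ∀ (i : ℕ) (x : ℕ → ℕ), extSeq s i x ∈ U := by
    intro i x
    apply h2
    intro j hj
    have hjn : j < n := by
      have : j ≤ I.sup id := Finset.le_sup (f := id) hj
      omega
    have hjs : j < s.length := lt_of_lt_of_le hjn hlen
    have : extSeq s i x j = y j := by
      unfold extSeq
      simp only [hjs, dif_pos]
      exact hsget j hjn
    rw [this]
    exact (h1 j hj).2
  -- each preimage of A is residual
  have hm : ∀ i : ℕ, (extSeq s i) ⁻¹' A ∈ residual (ℕ → ℕ) := by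
    intro i
    have hpre' : (extSeq s i) ⁻¹' {x : ℕ → ℕ | x ∈ A ↔ x ∈ U} ∈ residual (ℕ → ℕ) :=
      tendsto_residual_of_isOpenMap (extSeq_continuous s i) (extSeq_isOpenMap s i) hR
    exact Filter.mem_of_superset hpre' fun x hx => (Set.mem_preimage.mp hx).mpr (hrangeU i x)
  have hT : (⋂ i : ℕ, (extSeq s i) ⁻¹' A) ∈ residual (ℕ → ℕ) :=
    (countable_iInter_mem).mpr hm
  obtain ⟨x, hx⟩ := (dense_of_mem_residual hT).nonempty
  exact hAindep ⟨s, hsS, x, fun i => Set.mem_iInter.mp hx i⟩
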